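/- Let S ⊆ {1,…,N}. Then S is Q_ℝ-redundant if and only if S^c is A_ℝ-saturated. -/

import Mathlib

/-- `S` is `Q_ℝ`-redundant: there exist `c i ≠ 0` for `i ∈ S` with `∑_{i ∈ S} c i • q i = 0`.
We encode `c` as a function on all indices vanishing outside `S`. -/
def QRedundant {N k : ℕ} (q : Fin N → (Fin k → ℝ)) (S : Set (Fin N)) : Prop :=
  ∃ c : Fin N → ℝ, (∀ i ∈ S, c i ≠ 0) ∧ (∀ i ∉ S, c i = 0) ∧ ∑ i, c i • q i = 0

/-- `S` is `A_ℝ`-saturated: there is a linear map `l : ℝ^m → ℝ` with `S = {i : l (a i) = 0}`. -/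
def ASaturated {N m : ℕ} (a : Fin N → (Fin m → ℝ)) (S : Set (Fin N)) : Prop :=
  ∃ l : (Fin m → ℝ) →ₗ[ℝ] ℝ, S = {i | l (a i) = 0}

/-- Gale duality: `S ⊆ [N]` is `Q_ℝ`-redundant iff its complement is `A_ℝ`-saturated. -/
theorem qRedundant_iff_compl_aSaturated
    {N k m : ℕ} (hN : 1 ≤ N)
    (q : Fin N → (Fin k → ℝ)) (a : Fin N → (Fin m → ℝ))
    (hq : Submodule.span ℝ (Set.range q) = ⊤)
    (ha : Submodule.span ℝ (Set.range a) = ⊤)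
    (hexact : ∀ c : Fin N → ℝ,
      (∑ i, c i • a i = 0) ↔ ∃ lam : Fin k → ℝ, ∀ i, c i = ∑ j, q i j * lam j)
    (S : Set (Fin N)) :
    QRedundant q S ↔ ASaturated a Sᶜ := by
  constructor
  · rintro ⟨c, hcS, hcSc, hsum⟩
    -- T : ℝ^N → ℝ^m, T t = ∑ t_i a_i ; φ : ℝ^N → ℝ, φ t = ∑ t_i c_i
    set T : (Fin N → ℝ) →ₗ[ℝ] (Fin m → ℝ) := Fintype.linearCombination ℝ a with hT
    set φ : (Fin N → ℝ) →ₗ[ℝ] ℝ := Fintype.linearCombination ℝ c with hφ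
    have hTsurj : Function.Surjective T := by
      rw [← LinearMap.range_eq_top, hT, Fintype.range_linearCombination, ha]
    have hker : ∀ t, T t = 0 → φ t = 0 := by
      intro t ht
      have ht' : ∑ i, t i • a i = 0 := by
        rw [hT] at ht; simpa [Fintype.linearCombination_apply] using ht
      obtain ⟨lam, hlam⟩ := (hexact t).mp ht'
      have : φ t = ∑ i, t i * c i := by
        simp [hφ, Fintype.linearCombination_apply, smul_eq_mul]
      rw [this]
      have : ∑ i, t i * c i = ∑ j, lam j * (∑ i, c i * q i j) := by
        calc ∑ i, t i * c i = ∑ i, ∑ j, q i j * lam j * c i := by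
              refine Finset.sum_congr rfl fun i _ => ?_
              rw [hlam i, Finset.sum_mul]
          _ = ∑ j, ∑ i, q i j * lam j * c i := Finset.sum_comm
          _ = ∑ j, lam j * (∑ i, c i * q i j) := by
              refine Finset.sum_congr rfl fun j _ => ?_
              rw [Finset.mul_sum]
              refine Finset.sum_congr rfl fun i _ => ?_
              ring
      rw [this]
      refine Finset.sum_eq_zero fun j _ => ?_
      have : (∑ i, c i • q i) j = ∑ i, c i * q i j := by
        simp [Finset.sum_apply]
      rw [← this, hsum]
      simp
    obtain ⟨g, hg⟩ := T.exists_rightInverse_of_surjective (LinearMap.range_eq_top.mpr hTsurj)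
    refine ⟨φ.comp g, ?_⟩
    have key : ∀ i, φ (g (a i)) = c i := by
      intro i
      have h1 : T (Pi.single i 1) = a i := by
        rw [hT, Fintype.linearCombination_apply_single, one_smul]
      have h2 : T (g (a i) - Pi.single i 1) = 0 := by
        rw [map_sub, h1]
        have : T (g (a i)) = a i := congrFun (congrArg DFunLike.coe hg) (a i)
        rw [this, sub_self]
      have h3 := hker _ h2
      rw [map_sub] at h3
      have h4 : φ (Pi.single i 1) = c i := by
        rw [hφ, Fintype.linearCombination_apply_single, one_smul]
      linarith [h3, h4]
    ext i
    simp only [Set.mem_compl_iff, Set.mem_setOf_eq, LinearMap.comp_apply, key]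
    constructor
    · intro h; exact hcSc i h
    · intro h hi; exact hcS i hi h
  · rintro ⟨l, hl⟩
    refine ⟨fun i => l (a i), ?_, ?_, ?_⟩
    · intro i hi h
      have : i ∈ Sᶜ := hl ▸ h
      exact this hi
    · intro i hi
      have : i ∈ Sᶜ := hi
      rw [hl] at this
      exact this
    · funext j
      simp only [Pi.zero_apply]
      have hc : ∑ i, (fun i => q i j) i • a i = 0 := by
        refine (hexact _).mpr ⟨Pi.single j 1, fun i => ?_⟩
        simp [Pi.single_apply, Finset.sum_ite_eq']
      have := congrArg l hc
      rw [map_sum, map_zero] at this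
      simp only [map_smul, smul_eq_mul] at this
      have h2 : (∑ i, l (a i) • q i) j = ∑ i, l (a i) * q i j := by
        simp [Finset.sum_apply]
      rw [h2]
      rw [← this]
      exact Finset.sum_congr rfl fun i _ => mul_comm _ _
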